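/- Fix an integer k≥1. Let (ζ_j)_{j≥1} be a strictly increasing sequence of positive real numbers with Σ_{j=1}^∞ ζ_j^{−k} < ∞, and for each n≥1 let x_{1;n} < ⋯ < x_{n;n} be real numbers with ζ_j < x_{j;n} for 1≤j≤n and lim_{n→∞} x_{j;n} = ζ_j for each fixed j. Then the infinite product z ↦ ∏_{j=1}^∞ E_{k−1}(z/ζ_j) defines an entire function and the finite products z ↦ ∏_{j=1}^n E_{k−1}(z/x_{j;n}) converge to it locally uniformly on ℂ as n→∞. -/

import Mathlib

open Finset Filter
open Topology Metric

/-- The `m`-th elementary factor `E_m(w) = (1−w)·exp(Σ_{j=1}^m w^j/j)`. -/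
noncomputable def elemFactor (m : ℕ) (w : ℂ) : ℂ :=
  (1 - w) * Complex.exp (∑ j ∈ Finset.range m, w ^ (j + 1) / ((j : ℂ) + 1))

noncomputable def efLog (m : ℕ) (w : ℂ) : ℂ :=
  Complex.log (1 - w) + ∑ j ∈ Finset.range m, w ^ (j + 1) / ((j : ℂ) + 1)

lemma elemFactor_eq_exp {m : ℕ} {w : ℂ} (hw : w ≠ 1) :
    elemFactor m w = Complex.exp (efLog m w) := by
  rw [efLog, Complex.exp_add, elemFactor, Complex.exp_log (sub_ne_zero.mpr (Ne.symm hw))]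

lemma continuous_elemFactor (m : ℕ) : Continuous (elemFactor m) := by
  unfold elemFactor
  fun_prop

lemma hasSum_efLog {m : ℕ} {w : ℂ} (hw : ‖w‖ < 1) :
    HasSum (fun n : ℕ => w ^ (n + (m + 1)) / ((n + (m + 1) : ℕ) : ℂ)) (-(efLog m w)) := by
  have h1 : HasSum (fun n : ℕ => w ^ n / (n : ℂ)) (-Complex.log (1 - w)) :=
    Complex.hasSum_taylorSeries_neg_log hw
  have h2 := (hasSum_nat_add_iff (f := fun n : ℕ => w ^ n / (n : ℂ))
      (g := -Complex.log (1 - w) - ∑ i ∈ Finset.range (m + 1), w ^ i / (i : ℂ)) (m + 1)).2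
    (by rwa [sub_add_cancel])
  suffices e : -(efLog m w) = -Complex.log (1 - w) - ∑ i ∈ Finset.range (m + 1), w ^ i / (i : ℂ) by
    rw [e]; exact h2
  rw [Finset.sum_range_succ']
  simp only [Nat.cast_zero, pow_zero, Nat.cast_add, Nat.cast_one]
  rw [efLog]
  ring

lemma norm_efLog_le {m : ℕ} {w : ℂ} (hw : ‖w‖ ≤ 1 / 2) :
    ‖efLog m w‖ ≤ 2 * ‖w‖ ^ (m + 1) := by
  have hw1 : ‖w‖ < 1 := lt_of_le_of_lt hw (by norm_num)
  have h := hasSum_efLog (m := m) hw1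
  have hbound : ∀ n : ℕ, ‖w ^ (n + (m + 1)) / ((n + (m + 1) : ℕ) : ℂ)‖
      ≤ ‖w‖ ^ (m + 1) * (1 / 2) ^ n := by
    intro n
    rw [norm_div]
    have h1 : (1 : ℝ) ≤ ‖((n + (m + 1) : ℕ) : ℂ)‖ := by
      rw [Complex.norm_natCast]
      exact_mod_cast Nat.one_le_iff_ne_zero.mpr (by omega)
    calc ‖w ^ (n + (m + 1))‖ / ‖((n + (m + 1) : ℕ) : ℂ)‖
        ≤ ‖w ^ (n + (m + 1))‖ / 1 :=
          div_le_div_of_nonneg_left (norm_nonneg _) one_pos h1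
      _ = ‖w‖ ^ (n + (m + 1)) := by rw [div_one, norm_pow]
      _ = ‖w‖ ^ (m + 1) * ‖w‖ ^ n := by rw [← pow_add]; ring_nf
      _ ≤ ‖w‖ ^ (m + 1) * (1 / 2) ^ n := by
          gcongr
  have hsumm : Summable (fun n : ℕ => ‖w‖ ^ (m + 1) * (1 / 2) ^ n) :=
    (summable_geometric_of_lt_one (by norm_num) (by norm_num)).mul_left _
  have hsn : Summable (fun n : ℕ => ‖w ^ (n + (m + 1)) / ((n + (m + 1) : ℕ) : ℂ)‖) :=
    hsumm.of_nonneg_of_le (fun n => norm_nonneg _) hbound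
  calc ‖efLog m w‖ = ‖-(efLog m w)‖ := (norm_neg _).symm
    _ = ‖∑' n : ℕ, w ^ (n + (m + 1)) / ((n + (m + 1) : ℕ) : ℂ)‖ := by rw [h.tsum_eq]
    _ ≤ ∑' n : ℕ, ‖w ^ (n + (m + 1)) / ((n + (m + 1) : ℕ) : ℂ)‖ := norm_tsum_le_tsum_norm hsn
    _ ≤ ∑' n : ℕ, ‖w‖ ^ (m + 1) * (1 / 2) ^ n := Summable.tsum_le_tsum hbound hsn hsumm
    _ = ‖w‖ ^ (m + 1) * ∑' n : ℕ, (1 / 2 : ℝ) ^ n := tsum_mul_left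
    _ = ‖w‖ ^ (m + 1) * 2 := by
        rw [tsum_geometric_of_lt_one (by norm_num) (by norm_num)]
        norm_num
    _ = 2 * ‖w‖ ^ (m + 1) := by ring

lemma norm_div_real {z : ℂ} {a : ℝ} (ha : 0 < a) : ‖z / (a : ℂ)‖ = ‖z‖ / a := by
  rw [norm_div, Complex.norm_real, Real.norm_of_nonneg ha.le]

lemma norm_div_real_le {z : ℂ} {R a c : ℝ} (hz : ‖z‖ ≤ R) (hc : 0 < c) (hca : c ≤ a) :
    ‖z / (a : ℂ)‖ ≤ R / c := by
  rw [norm_div_real (hc.trans_le hca)]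
  exact div_le_div₀ (le_trans (norm_nonneg z) hz) hz hc hca

lemma norm_div_real_half {z : ℂ} {a c : ℝ} (hc : 0 < c) (hca : c ≤ a) (h2 : 2 * ‖z‖ ≤ c) :
    ‖z / (a : ℂ)‖ ≤ 1 / 2 := by
  have ha : 0 < a := hc.trans_le hca
  rw [norm_div_real ha, div_le_div_iff₀ ha two_pos]
  nlinarith [norm_nonneg z]

lemma norm_elemFactor_le {m : ℕ} {w : ℂ} {c : ℝ} (hw : ‖w‖ ≤ c) :
    ‖elemFactor m w‖ ≤ (1 + c) * Real.exp (m * max 1 c ^ m) := by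
  have hc : 0 ≤ c := le_trans (norm_nonneg w) hw
  rw [elemFactor, norm_mul]
  have h1 : ‖(1 : ℂ) - w‖ ≤ 1 + c := by
    calc ‖(1 : ℂ) - w‖ ≤ ‖(1 : ℂ)‖ + ‖w‖ := norm_sub_le _ _
      _ ≤ 1 + c := by rw [norm_one]; linarith
  have h2 : ‖Complex.exp (∑ j ∈ Finset.range m, w ^ (j + 1) / ((j : ℂ) + 1))‖
      ≤ Real.exp (m * max 1 c ^ m) := by
    rw [Complex.norm_exp]
    apply Real.exp_le_exp.2
    calc (∑ j ∈ Finset.range m, w ^ (j + 1) / ((j : ℂ) + 1)).re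
        ≤ ‖∑ j ∈ Finset.range m, w ^ (j + 1) / ((j : ℂ) + 1)‖ := Complex.re_le_norm _
      _ ≤ ∑ j ∈ Finset.range m, ‖w ^ (j + 1) / ((j : ℂ) + 1)‖ := norm_sum_le _ _
      _ ≤ ∑ j ∈ Finset.range m, max 1 c ^ m := by
          apply Finset.sum_le_sum
          intro j hj
          rw [norm_div, norm_pow]
          have hd : (1 : ℝ) ≤ ‖((j : ℂ) + 1)‖ := by
            have : ((j : ℂ) + 1) = ((j + 1 : ℕ) : ℂ) := by push_cast; ring
            rw [this, Complex.norm_natCast]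
            exact_mod_cast Nat.one_le_iff_ne_zero.mpr (by omega)
          calc ‖w‖ ^ (j + 1) / ‖(j : ℂ) + 1‖ ≤ ‖w‖ ^ (j + 1) / 1 :=
                div_le_div_of_nonneg_left (pow_nonneg (norm_nonneg _) _) one_pos hd
            _ = ‖w‖ ^ (j + 1) := div_one _
            _ ≤ max 1 c ^ (j + 1) := by
                apply pow_le_pow_left₀ (norm_nonneg _)
                exact le_trans hw (le_max_right 1 c)
            _ ≤ max 1 c ^ m := by
                apply pow_le_pow_right₀ (le_max_left 1 c)
                exact Finset.mem_range.1 hj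
      _ = m * max 1 c ^ m := by rw [Finset.sum_const, Finset.card_range, nsmul_eq_mul]
  exact mul_le_mul h1 h2 (norm_nonneg _) (by linarith)

lemma efLog_tail_bound {m : ℕ} {z : ℂ} {a c : ℝ} (hc : 0 < c) (hca : c ≤ a)
    (h2 : 2 * ‖z‖ ≤ c) :
    ‖efLog m (z / (a : ℂ))‖ ≤ 2 * ‖z‖ ^ (m + 1) * (1 / c ^ (m + 1)) := by
  have ha : 0 < a := hc.trans_le hca
  calc ‖efLog m (z / (a : ℂ))‖ ≤ 2 * ‖z / (a : ℂ)‖ ^ (m + 1) :=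
        norm_efLog_le (norm_div_real_half hc hca h2)
    _ = 2 * (‖z‖ / a) ^ (m + 1) := by rw [norm_div_real ha]
    _ ≤ 2 * (‖z‖ / c) ^ (m + 1) := by gcongr
    _ = 2 * ‖z‖ ^ (m + 1) * (1 / c ^ (m + 1)) := by rw [div_pow]; ring

lemma ne_one_of_norm_le_half {w : ℂ} (hw : ‖w‖ ≤ 1 / 2) : w ≠ 1 := by
  intro h
  rw [h, norm_one] at hw
  norm_num at hw

lemma tail_summable {m : ℕ} {ζ : ℕ → ℝ} (hζpos : ∀ j, 0 < ζ j)
    (hsum : Summable fun j : ℕ => 1 / ζ j ^ (m + 1))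
    (z : ℂ) (N : ℕ) (hN : ∀ j, N ≤ j → 2 * ‖z‖ ≤ ζ j) :
    Summable (fun i : ℕ => efLog m (z / (ζ (i + N) : ℂ))) := by
  apply Summable.of_norm_bounded (g := fun i => 2 * ‖z‖ ^ (m + 1) * (1 / ζ (i + N) ^ (m + 1)))
    (((summable_nat_add_iff N).2 hsum).mul_left _)
  intro i
  exact efLog_tail_bound (hζpos (i + N)) le_rfl (hN _ (Nat.le_add_left N i))

lemma hasProd_decomp {m : ℕ} {ζ : ℕ → ℝ} (hζpos : ∀ j, 0 < ζ j)
    (hsum : Summable fun j : ℕ => 1 / ζ j ^ (m + 1))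
    (z : ℂ) (N : ℕ) (hN : ∀ j, N ≤ j → 2 * ‖z‖ ≤ ζ j) :
    HasProd (fun j : ℕ => elemFactor m (z / (ζ j : ℂ)))
      ((∏ j ∈ Finset.range N, elemFactor m (z / (ζ j : ℂ))) *
        Complex.exp (∑' i : ℕ, efLog m (z / (ζ (i + N) : ℂ)))) := by
  have hsummable := tail_summable hζpos hsum z N hN
  have hT := hsummable.hasSum
  have hhalf : ∀ i : ℕ, ‖z / (ζ (i + N) : ℂ)‖ ≤ 1 / 2 := fun i =>
    norm_div_real_half (hζpos (i + N)) le_rfl (hN _ (Nat.le_add_left N i))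
  have hprod_tail : HasProd (fun i : ℕ => elemFactor m (z / (ζ (i + N) : ℂ)))
      (Complex.exp (∑' i : ℕ, efLog m (z / (ζ (i + N) : ℂ)))) := by
    have h1 := hT.cexp
    have heq : (fun i : ℕ => elemFactor m (z / (ζ (i + N) : ℂ)))
        = Complex.exp ∘ (fun i : ℕ => efLog m (z / (ζ (i + N) : ℂ))) := by
      funext i
      exact elemFactor_eq_exp (ne_one_of_norm_le_half (hhalf i))
    rw [heq]
    exact h1
  have hmem : ∀ i : ℕ, i + N ∈ (((Finset.range N : Finset ℕ) : Set ℕ))ᶜ := by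
    intro i
    simp only [Set.mem_compl_iff, Finset.coe_range, Set.mem_Iio, not_lt]
    omega
  let e : ℕ ≃ ((((Finset.range N : Finset ℕ) : Set ℕ))ᶜ : Set ℕ) :=
  { toFun := fun i => ⟨i + N, hmem i⟩
    invFun := fun j => j.1 - N
    left_inv := fun i => by simp
    right_inv := fun j => by
      have hj : N ≤ (j : ℕ) := by
        have h2 := j.2
        simp only [Set.mem_compl_iff, Finset.coe_range, Set.mem_Iio, not_lt] at h2
        exact h2
      exact Subtype.ext (by simp; omega) }
  have hc : HasProd ((fun j : ℕ => elemFactor m (z / (ζ j : ℂ))) ∘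
      (Subtype.val : ((((Finset.range N : Finset ℕ) : Set ℕ))ᶜ : Set ℕ) → ℕ))
      (Complex.exp (∑' i : ℕ, efLog m (z / (ζ (i + N) : ℂ)))) := by
    apply (Equiv.hasProd_iff e).1
    exact hprod_tail
  exact ((Finset.range N).hasProd (fun j : ℕ => elemFactor m (z / (ζ j : ℂ)))).mul_compl hc

lemma norm_prod_le_pow (u : ℕ → ℂ) (C : ℝ) (N : ℕ) (hu : ∀ j, j < N → ‖u j‖ ≤ C) :
    ‖∏ j ∈ Finset.range N, u j‖ ≤ C ^ N := by
  rw [norm_prod]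
  calc ∏ j ∈ Finset.range N, ‖u j‖ ≤ ∏ _j ∈ Finset.range N, C :=
        Finset.prod_le_prod (fun j _ => norm_nonneg _) (fun j hj => hu j (Finset.mem_range.1 hj))
    _ = C ^ N := by rw [Finset.prod_const, Finset.card_range]

lemma prod_diff_bound (u v : ℕ → ℂ) (C : ℝ) (hC : 1 ≤ C) :
    ∀ N : ℕ, (∀ j, j < N → ‖u j‖ ≤ C) → (∀ j, j < N → ‖v j‖ ≤ C) →
    ‖(∏ j ∈ Finset.range N, u j) - ∏ j ∈ Finset.range N, v j‖
      ≤ C ^ N * ∑ j ∈ Finset.range N, ‖u j - v j‖ := by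
  intro N
  induction N with
  | zero => simp
  | succ n ih =>
    intro hu hv
    have hu' : ∀ j, j < n → ‖u j‖ ≤ C := fun j hj => hu j (by omega)
    have hv' : ∀ j, j < n → ‖v j‖ ≤ C := fun j hj => hv j (by omega)
    have ihn := ih hu' hv'
    have hPv : ‖∏ j ∈ Finset.range n, v j‖ ≤ C ^ n := norm_prod_le_pow v C n hv'
    rw [Finset.prod_range_succ, Finset.prod_range_succ, Finset.sum_range_succ]
    have key : (∏ j ∈ Finset.range n, u j) * u n - (∏ j ∈ Finset.range n, v j) * v n
        = ((∏ j ∈ Finset.range n, u j) - ∏ j ∈ Finset.range n, v j) * u n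
          + (∏ j ∈ Finset.range n, v j) * (u n - v n) := by ring
    rw [key]
    have hCn : (0:ℝ) < C ^ n := pow_pos (lt_of_lt_of_le one_pos hC) n
    have hS : (0:ℝ) ≤ ∑ j ∈ Finset.range n, ‖u j - v j‖ :=
      Finset.sum_nonneg (fun j _ => norm_nonneg _)
    calc ‖_ * u n + _ * (u n - v n)‖
        ≤ ‖((∏ j ∈ Finset.range n, u j) - ∏ j ∈ Finset.range n, v j) * u n‖
          + ‖(∏ j ∈ Finset.range n, v j) * (u n - v n)‖ := norm_add_le _ _
      _ = ‖(∏ j ∈ Finset.range n, u j) - ∏ j ∈ Finset.range n, v j‖ * ‖u n‖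
          + ‖∏ j ∈ Finset.range n, v j‖ * ‖u n - v n‖ := by rw [norm_mul, norm_mul]
      _ ≤ (C ^ n * ∑ j ∈ Finset.range n, ‖u j - v j‖) * C + C ^ n * ‖u n - v n‖ := by
          gcongr
          exact hu n (by omega)
      _ ≤ C ^ (n + 1) * (∑ j ∈ Finset.range n, ‖u j - v j‖) + C ^ (n + 1) * ‖u n - v n‖ := by
          rw [pow_succ]
          have hd : (0:ℝ) ≤ ‖u n - v n‖ := norm_nonneg _
          nlinarith [mul_le_mul_of_nonneg_left hC (mul_nonneg hCn.le hd)]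
      _ = C ^ (n + 1) * ((∑ j ∈ Finset.range n, ‖u j - v j‖) + ‖u n - v n‖) := by ring

lemma zeta_tendsto_atTop {k : ℕ} {ζ : ℕ → ℝ} (hζpos : ∀ j, 0 < ζ j)
    (hζmono : StrictMono ζ) (hζsum : Summable fun j : ℕ => 1 / ζ j ^ k) :
    Tendsto ζ atTop atTop := by
  rcases tendsto_of_monotone hζmono.monotone with h | ⟨L, hL⟩
  · exact h
  · exfalso
    have hL0 : 0 < L := lt_of_lt_of_le (hζpos 0) (hζmono.monotone.ge_of_tendsto hL 0)
    have h1 : Tendsto (fun j : ℕ => 1 / ζ j ^ k) atTop (𝓝 (1 / L ^ k)) :=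
      tendsto_const_nhds.div (hL.pow k) (pow_ne_zero k hL0.ne')
    have h2 := tendsto_nhds_unique h1 hζsum.tendsto_atTop_zero
    have : (0:ℝ) < 1 / L ^ k := by positivity
    rw [h2] at this
    exact lt_irrefl 0 this

lemma sum_Ico_le_tail {γ : ℕ → ℝ} (hγ0 : ∀ j, 0 ≤ γ j) (hγs : Summable γ) (N n : ℕ) :
    ∑ j ∈ Finset.Ico N n, γ j ≤ ∑' i : ℕ, γ (i + N) := by
  rw [Finset.sum_Ico_eq_sum_range]
  have heq : ∀ k ∈ Finset.range (n - N), γ (N + k) = γ (k + N) := fun k _ => by rw [add_comm]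
  rw [Finset.sum_congr rfl heq]
  exact Summable.sum_le_tsum _ (fun i _ => hγ0 _) ((summable_nat_add_iff N).2 hγs)

lemma continuousOn_efLog (m : ℕ) : ContinuousOn (efLog m) (Metric.closedBall 0 (1 / 2)) := by
  unfold efLog
  apply ContinuousOn.add
  · apply ContinuousOn.clog (by fun_prop)
    intro w hw
    rw [Complex.mem_slitPlane_iff]
    left
    have hw' : ‖w‖ ≤ 1 / 2 := by simpa [Metric.mem_closedBall, dist_zero_right] using hw
    have h2 : |w.re| ≤ ‖w‖ := Complex.abs_re_le_norm w
    have h3 : w.re ≤ 1 / 2 := le_trans (le_abs_self _) (le_trans h2 hw')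
    simp only [Complex.sub_re, Complex.one_re]
    linarith
  · exact Continuous.continuousOn (by fun_prop)

lemma uniform_factor_conv {G : ℂ → ℂ} {ρ R : ℝ} (hρ : 0 < ρ) (hR : 0 < R)
    (hG : ContinuousOn G (Metric.closedBall 0 ρ))
    {c : ℝ} (hc : 0 < c) (hρc : R / c ≤ ρ)
    {y : ℕ → ℝ} (hy : Tendsto y atTop (𝓝 c)) (hyc : ∀ᶠ n in atTop, c ≤ y n)
    {ε : ℝ} (hε : 0 < ε) :
    ∀ᶠ n in atTop, ∀ z ∈ Metric.closedBall (0 : ℂ) R,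
      ‖G (z / (y n : ℂ)) - G (z / (c : ℂ))‖ ≤ ε := by
  have huc := (isCompact_closedBall (0 : ℂ) ρ).uniformContinuousOn_of_continuous hG
  rw [Metric.uniformContinuousOn_iff] at huc
  obtain ⟨δ, hδ, hδ'⟩ := huc ε hε
  have hyev : ∀ᶠ n in atTop, |y n - c| < δ * c * c / (R + 1) := by
    have h := Metric.tendsto_nhds.mp hy (δ * c * c / (R + 1)) (by positivity)
    simpa [Real.dist_eq] using h
  filter_upwards [hyev, hyc] with n h1 h2
  intro z hz
  have hzR : ‖z‖ ≤ R := by simpa [Metric.mem_closedBall, dist_zero_right] using hz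
  have hyn : 0 < y n := lt_of_lt_of_le hc h2
  have hm1 : z / (y n : ℂ) ∈ Metric.closedBall (0 : ℂ) ρ := by
    rw [Metric.mem_closedBall, dist_zero_right]
    exact le_trans (norm_div_real_le hzR hc h2) hρc
  have hm2 : z / (c : ℂ) ∈ Metric.closedBall (0 : ℂ) ρ := by
    rw [Metric.mem_closedBall, dist_zero_right]
    exact le_trans (norm_div_real_le hzR hc le_rfl) hρc
  have hdist : dist (z / (y n : ℂ)) (z / (c : ℂ)) < δ := by
    rw [dist_eq_norm]
    have hyne : ((y n : ℝ) : ℂ) ≠ 0 := by exact_mod_cast Complex.ofReal_ne_zero.2 hyn.ne'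
    have hcne : ((c : ℝ) : ℂ) ≠ 0 := Complex.ofReal_ne_zero.2 hc.ne'
    have heq : z / (y n : ℂ) - z / (c : ℂ)
        = z * (((c - y n : ℝ) : ℂ)) / (((y n * c : ℝ) : ℂ)) := by
      push_cast
      field_simp
    rw [heq, norm_div, norm_mul, Complex.norm_real, Complex.norm_real]
    have habs : ‖(y n * c : ℝ)‖ = y n * c := by
      rw [Real.norm_eq_abs, abs_of_pos (mul_pos hyn hc)]
    rw [habs]
    have h1' : |c - y n| < δ * c * c / (R + 1) := by rwa [abs_sub_comm]
    calc ‖z‖ * ‖(c - y n : ℝ)‖ / (y n * c) ≤ R * |c - y n| / (c * c) := by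
          rw [Real.norm_eq_abs]
          gcongr
      _ < δ := by
          rw [div_lt_iff₀ (by positivity)]
          calc R * |c - y n| ≤ R * (δ * c * c / (R + 1)) := by gcongr
            _ < δ * (c * c) := by
                rw [div_eq_mul_inv]
                have hlt : R * (R + 1)⁻¹ < 1 := by
                  rw [mul_inv_lt_iff₀ (by positivity)]
                  linarith
                nlinarith [mul_pos (mul_pos hδ hc) hc]
  have hfin := hδ' _ hm1 _ hm2 hdist
  rw [dist_eq_norm] at hfin
  exact hfin.le

lemma tsum_shift_split {f : ℕ → ℂ} (N M : ℕ) (hNM : N ≤ M)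
    (hs : Summable (fun i : ℕ => f (i + N))) :
    (∑' i : ℕ, f (i + N)) = (∑ j ∈ Finset.Ico N M, f j) + ∑' i : ℕ, f (i + M) := by
  have h1 := (Summable.sum_add_tsum_nat_add (f := fun i : ℕ => f (i + N)) (M - N) hs).symm
  rw [h1]
  congr 1
  · rw [Finset.sum_Ico_eq_sum_range]
    exact Finset.sum_congr rfl (fun k _ => by rw [Nat.add_comm])
  · exact tsum_congr (fun i => by congr 1; omega)
set_option maxHeartbeats 2000000 in
lemma main_unif {m : ℕ} {ζ : ℕ → ℝ} (hζpos : ∀ j, 0 < ζ j)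
    (hζmono : Monotone ζ) (hζtop : Tendsto ζ atTop atTop)
    (hsum : Summable fun j : ℕ => 1 / ζ j ^ (m + 1))
    (y : ℕ → ℕ → ℝ) (hyge : ∀ n j, j < n → ζ j ≤ y n j)
    (hylim : ∀ j, Tendsto (fun n => y n j) atTop (𝓝 (ζ j)))
    (R : ℝ) (hR : 0 < R) :
    TendstoUniformlyOn
      (fun (n : ℕ) (z : ℂ) => ∏ j ∈ Finset.range n, elemFactor m (z / (y n j : ℂ)))
      (fun z : ℂ => ∏' j : ℕ, elemFactor m (z / (ζ j : ℂ))) atTop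
      (Metric.closedBall 0 R) := by
  classical
  have hc0 : 0 < ζ 0 := hζpos 0
  set ρ := R / ζ 0 with hρdef
  have hρ0 : 0 < ρ := by positivity
  set C := (1 + ρ) * Real.exp (m * max 1 ρ ^ m) with hCdef
  have hC1 : 1 ≤ C := by
    have h2 : (1:ℝ) ≤ Real.exp (m * max 1 ρ ^ m) := by
      rw [Real.one_le_exp_iff]
      positivity
    nlinarith
  have hC0 : 0 < C := lt_of_lt_of_le one_pos hC1
  have hfactor : ∀ (z : ℂ), ‖z‖ ≤ R → ∀ a : ℝ, ζ 0 ≤ a → ‖elemFactor m (z / (a:ℂ))‖ ≤ C :=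
    fun z hz a ha => norm_elemFactor_le (norm_div_real_le hz hc0 ha)
  set γ : ℕ → ℝ := fun j => 2 * R ^ (m+1) * (1 / ζ j ^ (m+1)) with hγdef
  have hγ0 : ∀ j, 0 ≤ γ j := fun j => by
    have := hζpos j
    simp only [hγdef]
    positivity
  have hγs : Summable γ := hsum.mul_left _
  set tail : ℕ → ℝ := fun M => ∑' i : ℕ, γ (i + M) with htaildef
  have htailtend : Tendsto tail atTop (𝓝 0) := tendsto_sum_nat_add γ
  obtain ⟨N, hN⟩ := eventually_atTop.1 ((hζtop.eventually_ge_atTop (2*R)).and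
    (htailtend.eventually_lt_const one_pos))
  have hNζ : ∀ j, N ≤ j → 2*R ≤ ζ j := fun j hj => (hN j hj).1
  have hN1 : tail N ≤ 1 := (hN N le_rfl).2.le
  have hB1 : (1:ℝ) ≤ C ^ N := one_le_pow₀ hC1
  have hB0 : (0:ℝ) < C ^ N := pow_pos hC0 N
  have hkey : ∀ (z : ℂ), ‖z‖ ≤ R → ∀ j, N ≤ j → ∀ a : ℝ, ζ j ≤ a →
      ‖z / (a:ℂ)‖ ≤ 1/2 ∧ ‖efLog m (z / (a:ℂ))‖ ≤ γ j := by
    intro z hz j hj a ha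
    have h2z : 2 * ‖z‖ ≤ ζ j := le_trans (by linarith) (hNζ j hj)
    refine ⟨norm_div_real_half (hζpos j) ha h2z, ?_⟩
    calc ‖efLog m (z/(a:ℂ))‖ ≤ 2 * ‖z‖^(m+1) * (1 / ζ j ^ (m+1)) :=
          efLog_tail_bound (hζpos j) ha h2z
      _ ≤ γ j := by
          have hζj := hζpos j
          have h0 : (0:ℝ) ≤ 1 / ζ j ^ (m+1) := by positivity
          simp only [hγdef]
          gcongr
  rw [Metric.tendstoUniformlyOn_iff]
  intro ε hε
  set δ := min (1/8 : ℝ) (ε / (48 * C ^ N)) with hδdef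
  have hδ0 : 0 < δ := lt_min (by norm_num) (by positivity)
  have hδ18 : δ ≤ 1/8 := min_le_left _ _
  obtain ⟨M, hM⟩ := eventually_atTop.1
    ((htailtend.eventually_lt_const hδ0).and (eventually_ge_atTop N))
  have hMδ : tail M ≤ δ := (hM M le_rfl).1.le
  have hNM : N ≤ M := (hM M le_rfl).2
  set ε1 := ε / (24 * C ^ N * ((N:ℝ)+1)) with hε1def
  have hε1 : 0 < ε1 := by positivity
  set ε2 := δ / ((M:ℝ)+1) with hε2def
  have hε2 : 0 < ε2 := by positivity
  have Eb : ∀ᶠ n in atTop, ∀ j ∈ Finset.range N, ∀ z ∈ Metric.closedBall (0:ℂ) R,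
      ‖elemFactor m (z / (y n j : ℂ)) - elemFactor m (z / (ζ j : ℂ))‖ ≤ ε1 := by
    rw [Finset.eventually_all]
    intro j _
    refine uniform_factor_conv hρ0 hR (continuous_elemFactor m).continuousOn (hζpos j)
      ?_ (hylim j) ?_ hε1
    · exact div_le_div_of_nonneg_left hR.le hc0 (hζmono (Nat.zero_le j))
    · exact (eventually_gt_atTop j).mono (fun n hn => hyge n j hn)
  have Ec : ∀ᶠ n in atTop, ∀ j ∈ Finset.Ico N M, ∀ z ∈ Metric.closedBall (0:ℂ) R,
      ‖efLog m (z / (y n j : ℂ)) - efLog m (z / (ζ j : ℂ))‖ ≤ ε2 := by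
    rw [Finset.eventually_all]
    intro j hj
    obtain ⟨hjN, _⟩ := Finset.mem_Ico.1 hj
    refine uniform_factor_conv one_half_pos hR (continuousOn_efLog m) (hζpos j)
      ?_ (hylim j) ?_ hε2
    · rw [div_le_iff₀ (hζpos j)]
      have := hNζ j hjN
      linarith
    · exact (eventually_gt_atTop j).mono (fun n hn => hyge n j hn)
  filter_upwards [eventually_ge_atTop M, Eb, Ec] with n hnM hhead hmid
  intro z hz
  change dist (∏' j : ℕ, elemFactor m (z / (ζ j : ℂ)))
    (∏ j ∈ Finset.range n, elemFactor m (z / (y n j : ℂ))) < ε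
  have hzR : ‖z‖ ≤ R := by simpa [Metric.mem_closedBall, dist_zero_right] using hz
  have hNn : N ≤ n := le_trans hNM hnM
  set u : ℕ → ℂ := fun j => elemFactor m (z / (y n j : ℂ)) with hudef
  set v : ℕ → ℂ := fun j => elemFactor m (z / (ζ j : ℂ)) with hvdef
  set gx : ℕ → ℂ := fun j => efLog m (z / (y n j : ℂ)) with hgxdef
  set gz : ℕ → ℂ := fun j => efLog m (z / (ζ j : ℂ)) with hgzdef
  have hu : ∀ j, j < N → ‖u j‖ ≤ C := fun j hj =>
    hfactor z hzR _ (le_trans (hζmono (Nat.zero_le j)) (hyge n j (lt_of_lt_of_le hj hNn)))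
  have hv : ∀ j, j < N → ‖v j‖ ≤ C := fun j _ => hfactor z hzR _ (hζmono (Nat.zero_le j))
  -- decomposition of the partial product
  have hxsplit : ∏ j ∈ Finset.range n, u j
      = (∏ j ∈ Finset.range N, u j) * ∏ j ∈ Finset.Ico N n, u j :=
    (Finset.prod_range_mul_prod_Ico u hNn).symm
  have hIcoexp : ∏ j ∈ Finset.Ico N n, u j
      = Complex.exp (∑ j ∈ Finset.Ico N n, gx j) := by
    rw [Complex.exp_sum]
    refine Finset.prod_congr rfl (fun j hj => ?_)
    obtain ⟨hjN, hjn⟩ := Finset.mem_Ico.1 hj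
    exact elemFactor_eq_exp
      (ne_one_of_norm_le_half ((hkey z hzR j hjN _ (hyge n j hjn)).1))
  -- decomposition of the limit
  have hF : (∏' j : ℕ, elemFactor m (z / (ζ j : ℂ)))
      = (∏ j ∈ Finset.range N, v j) * Complex.exp (∑' i : ℕ, gz (i + N)) :=
    (hasProd_decomp hζpos hsum z N (fun j hj => le_trans (by linarith) (hNζ j hj))).tprod_eq
  -- bounds on the tails
  have hgxbound : ∀ a b : ℕ, N ≤ a → b ≤ n → ‖∑ j ∈ Finset.Ico a b, gx j‖ ≤ tail a := by
    intro a b haN hbn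
    calc ‖∑ j ∈ Finset.Ico a b, gx j‖ ≤ ∑ j ∈ Finset.Ico a b, ‖gx j‖ := norm_sum_le _ _
      _ ≤ ∑ j ∈ Finset.Ico a b, γ j := Finset.sum_le_sum (fun j hj =>
          (hkey z hzR j (le_trans haN (Finset.mem_Ico.1 hj).1) _
            (hyge n j (lt_of_lt_of_le (Finset.mem_Ico.1 hj).2 hbn))).2)
      _ ≤ tail a := sum_Ico_le_tail hγ0 hγs a b
  have hgz_summable : ∀ a : ℕ, N ≤ a → Summable (fun i : ℕ => gz (i + a)) := by
    intro a ha
    exact tail_summable hζpos hsum z a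
      (fun j hj => le_trans (by linarith) (hNζ j (le_trans ha hj)))
  have hgztail : ∀ a : ℕ, N ≤ a → ‖∑' i : ℕ, gz (i + a)‖ ≤ tail a := by
    intro a ha
    have hs := hgz_summable a ha
    have hs' : Summable (fun i : ℕ => ‖gz (i + a)‖) := summable_norm_iff.2 hs
    calc ‖∑' i : ℕ, gz (i + a)‖ ≤ ∑' i : ℕ, ‖gz (i + a)‖ := norm_tsum_le_tsum_norm hs'
      _ ≤ ∑' i : ℕ, γ (i + a) := Summable.tsum_le_tsum
          (fun i => (hkey z hzR (i+a) (le_trans ha (Nat.le_add_left a i)) _ le_rfl).2)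
          hs' ((summable_nat_add_iff a).2 hγs)
  -- split T at M
  have hTsplit : (∑' i : ℕ, gz (i + N))
      = (∑ j ∈ Finset.Ico N M, gz j) + ∑' i : ℕ, gz (i + M) :=
    tsum_shift_split N M hNM (hgz_summable N le_rfl)
  have hSnsplit : ∑ j ∈ Finset.Ico N n, gx j
      = (∑ j ∈ Finset.Ico N M, gx j) + ∑ j ∈ Finset.Ico M n, gx j :=
    (Finset.sum_Ico_consecutive gx hNM hnM).symm
  -- middle difference
  have hD : ‖(∑ j ∈ Finset.Ico N M, gx j) - ∑ j ∈ Finset.Ico N M, gz j‖ ≤ δ := by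
    rw [← Finset.sum_sub_distrib]
    calc ‖∑ j ∈ Finset.Ico N M, (gx j - gz j)‖
        ≤ ∑ j ∈ Finset.Ico N M, ‖gx j - gz j‖ := norm_sum_le _ _
      _ ≤ ∑ _j ∈ Finset.Ico N M, ε2 := Finset.sum_le_sum (fun j hj => hmid j hj z hz)
      _ = ((M - N : ℕ) : ℝ) * ε2 := by
          rw [Finset.sum_const, Nat.card_Ico, nsmul_eq_mul]
      _ ≤ (((M:ℝ)+1)) * ε2 := by
          gcongr
          have h1 : (M - N : ℕ) ≤ M := Nat.sub_le M N
          have : ((M - N : ℕ) : ℝ) ≤ (M : ℝ) := by exact_mod_cast h1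
          linarith
      _ = δ := by
          rw [hε2def]
          field_simp
  -- total difference of the exponents
  have hST : ‖(∑ j ∈ Finset.Ico N n, gx j) - ∑' i : ℕ, gz (i + N)‖ ≤ 3 * δ := by
    rw [hSnsplit, hTsplit]
    have heq : ((∑ j ∈ Finset.Ico N M, gx j) + ∑ j ∈ Finset.Ico M n, gx j)
        - ((∑ j ∈ Finset.Ico N M, gz j) + ∑' i : ℕ, gz (i + M))
        = ((∑ j ∈ Finset.Ico N M, gx j) - ∑ j ∈ Finset.Ico N M, gz j)
          + ((∑ j ∈ Finset.Ico M n, gx j) - ∑' i : ℕ, gz (i + M)) := by ring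
    rw [heq]
    calc ‖_ + _‖ ≤ ‖(∑ j ∈ Finset.Ico N M, gx j) - ∑ j ∈ Finset.Ico N M, gz j‖
          + ‖(∑ j ∈ Finset.Ico M n, gx j) - ∑' i : ℕ, gz (i + M)‖ := norm_add_le _ _
      _ ≤ δ + (tail M + tail M) := by
          gcongr
          calc ‖(∑ j ∈ Finset.Ico M n, gx j) - ∑' i : ℕ, gz (i + M)‖
              ≤ ‖∑ j ∈ Finset.Ico M n, gx j‖ + ‖∑' i : ℕ, gz (i + M)‖ := norm_sub_le _ _
            _ ≤ tail M + tail M := add_le_add (hgxbound M n hNM le_rfl) (hgztail M hNM)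
      _ ≤ δ + (δ + δ) := by gcongr
      _ = 3 * δ := by ring
  -- exponential estimates
  have hexp3 : ∀ w : ℂ, ‖w‖ ≤ 1 → ‖Complex.exp w‖ ≤ 3 := by
    intro w hw
    rw [Complex.norm_exp]
    have h1 : w.re ≤ 1 :=
      le_trans (le_abs_self _) (le_trans (Complex.abs_re_le_norm w) hw)
    calc Real.exp w.re ≤ Real.exp 1 := Real.exp_le_exp.2 h1
      _ ≤ 3 := le_of_lt (lt_trans Real.exp_one_lt_d9 (by norm_num))
  have hSnN : ‖∑ j ∈ Finset.Ico N n, gx j‖ ≤ 1 := le_trans (hgxbound N n le_rfl le_rfl) hN1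
  have hTN : ‖∑' i : ℕ, gz (i + N)‖ ≤ 1 := le_trans (hgztail N le_rfl) hN1
  -- head difference
  have hHd : ‖(∏ j ∈ Finset.range N, u j) - ∏ j ∈ Finset.range N, v j‖
      ≤ C ^ N * (((N:ℝ)+1) * ε1) := by
    calc ‖(∏ j ∈ Finset.range N, u j) - ∏ j ∈ Finset.range N, v j‖
        ≤ C ^ N * ∑ j ∈ Finset.range N, ‖u j - v j‖ := prod_diff_bound u v C hC1 N hu hv
      _ ≤ C ^ N * (((N:ℝ)+1) * ε1) := by
          gcongr
          calc ∑ j ∈ Finset.range N, ‖u j - v j‖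
              ≤ ∑ _j ∈ Finset.range N, ε1 := Finset.sum_le_sum
                (fun j hj => hhead j hj z hz)
            _ = (N:ℝ) * ε1 := by rw [Finset.sum_const, Finset.card_range, nsmul_eq_mul]
            _ ≤ ((N:ℝ)+1) * ε1 := by nlinarith
  have hHbound : ‖∏ j ∈ Finset.range N, v j‖ ≤ C ^ N := norm_prod_le_pow v C N hv
  -- difference of exponentials
  have hexpdiff : ‖Complex.exp (∑ j ∈ Finset.Ico N n, gx j)
      - Complex.exp (∑' i : ℕ, gz (i + N))‖ ≤ 18 * δ := by
    set Sn := ∑ j ∈ Finset.Ico N n, gx j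
    set T := ∑' i : ℕ, gz (i + N)
    have heq : Complex.exp Sn - Complex.exp T
        = Complex.exp T * (Complex.exp (Sn - T) - 1) := by
      rw [mul_sub, ← Complex.exp_add, mul_one]
      congr 1
      ring
    rw [heq, norm_mul]
    have h1 : ‖Complex.exp (Sn - T) - 1‖ ≤ 2 * ‖Sn - T‖ := by
      have := Complex.norm_exp_sub_one_le (x := Sn - T)
        (by calc ‖Sn - T‖ ≤ 3 * δ := hST
                 _ ≤ 1 := by linarith)
      simpa using this
    calc ‖Complex.exp T‖ * ‖Complex.exp (Sn - T) - 1‖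
        ≤ 3 * (2 * ‖Sn - T‖) := by
          have h3 := hexp3 T hTN
          have h4 : (0:ℝ) ≤ ‖Complex.exp (Sn - T) - 1‖ := norm_nonneg _
          nlinarith [norm_nonneg (Complex.exp T), norm_nonneg (Sn - T), hST]
      _ ≤ 3 * (2 * (3 * δ)) := by
          gcongr
      _ = 18 * δ := by ring
  -- final estimate
  rw [dist_eq_norm]
  have hfe : (∏' j : ℕ, v j)
      = (∏ j ∈ Finset.range N, v j) * Complex.exp (∑' i : ℕ, gz (i + N)) := hF
  rw [hfe, hxsplit, hIcoexp, norm_sub_rev]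
  have hsplit2 : (∏ j ∈ Finset.range N, u j) * Complex.exp (∑ j ∈ Finset.Ico N n, gx j)
      - (∏ j ∈ Finset.range N, v j) * Complex.exp (∑' i : ℕ, gz (i + N))
      = ((∏ j ∈ Finset.range N, u j) - ∏ j ∈ Finset.range N, v j)
          * Complex.exp (∑ j ∈ Finset.Ico N n, gx j)
        + (∏ j ∈ Finset.range N, v j)
          * (Complex.exp (∑ j ∈ Finset.Ico N n, gx j)
            - Complex.exp (∑' i : ℕ, gz (i + N))) := by ring
  rw [hsplit2]
  have hexpSn := hexp3 _ hSnN
  have hmain : ‖((∏ j ∈ Finset.range N, u j) - ∏ j ∈ Finset.range N, v j)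
          * Complex.exp (∑ j ∈ Finset.Ico N n, gx j)
        + (∏ j ∈ Finset.range N, v j)
          * (Complex.exp (∑ j ∈ Finset.Ico N n, gx j)
            - Complex.exp (∑' i : ℕ, gz (i + N)))‖ ≤ ε / 2 := by
    calc ‖_ + _‖
        ≤ ‖((∏ j ∈ Finset.range N, u j) - ∏ j ∈ Finset.range N, v j)
            * Complex.exp (∑ j ∈ Finset.Ico N n, gx j)‖
          + ‖(∏ j ∈ Finset.range N, v j)
            * (Complex.exp (∑ j ∈ Finset.Ico N n, gx j)
              - Complex.exp (∑' i : ℕ, gz (i + N)))‖ := norm_add_le _ _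
      _ ≤ (C ^ N * (((N:ℝ)+1) * ε1)) * 3 + C ^ N * (18 * δ) := by
          rw [norm_mul, norm_mul]
          apply add_le_add
          · apply mul_le_mul hHd hexpSn (norm_nonneg _)
            positivity
          · exact mul_le_mul hHbound hexpdiff (norm_nonneg _) hB0.le
      _ ≤ ε / 8 + 3 * (ε / 8) := by
          apply add_le_add
          · rw [hε1def]
            rw [show (C ^ N * (((N:ℝ)+1) * (ε / (24 * C ^ N * ((N:ℝ)+1))))) * 3
                = ε / 8 from by field_simp; ring]
          · have hδ2 : δ ≤ ε / (48 * C ^ N) := min_le_right _ _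
            calc C ^ N * (18 * δ) ≤ C ^ N * (18 * (ε / (48 * C ^ N))) := by gcongr
              _ = 3 * (ε / 8) := by field_simp; ring
      _ = ε / 2 := by ring
  calc ‖_‖ ≤ ε / 2 := hmain
    _ < ε := by linarith

lemma differentiable_partial_prod (m : ℕ) (c : ℕ → ℝ) (n : ℕ) :
    Differentiable ℂ (fun z : ℂ => ∏ j ∈ Finset.range n, elemFactor m (z / (c j : ℂ))) := by
  apply Differentiable.fun_finset_prod
  intro j _
  unfold elemFactor
  fun_prop

/-- Theorem 5.7 (convergence to the regularized characteristic function): if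
`Σ_j ζ_j^{−k} < ∞` and the zeros `x_{j;n}` satisfy `ζ_j < x_{j;n}` and `x_{j;n} → ζ_j`,
then `∏_{j=1}^∞ E_{k−1}(z/ζ_j)` defines an entire function and
`∏_{j=1}^n E_{k−1}(z/x_{j;n})` converges to it locally uniformly on `ℂ`. -/
theorem regularized_characteristic_function_convergence
    (k : ℕ) (hk : 1 ≤ k)
    (ζ : ℕ → ℝ)
    (hζpos : ∀ j, 0 < ζ j)
    (hζmono : StrictMono ζ)
    (hζsum : Summable (fun j : ℕ => 1 / ζ j ^ k))
    (x : ℕ → ℕ → ℝ)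
    (hxmono : ∀ n, ∀ i j, i < j → j < n → x n i < x n j)
    (hxgt : ∀ n, ∀ j, j < n → ζ j < x n j)
    (hxlim : ∀ j, Tendsto (fun n => x n j) atTop (nhds (ζ j))) :
    (∀ z : ℂ, Multipliable (fun j : ℕ => elemFactor (k - 1) (z / (ζ j : ℂ)))) ∧
    Differentiable ℂ (fun z : ℂ => ∏' j : ℕ, elemFactor (k - 1) (z / (ζ j : ℂ))) ∧
    TendstoLocallyUniformly
      (fun (n : ℕ) (z : ℂ) => ∏ j ∈ Finset.range n, elemFactor (k - 1) (z / (x n j : ℂ)))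
      (fun z : ℂ => ∏' j : ℕ, elemFactor (k - 1) (z / (ζ j : ℂ)))
      atTop := by
  have hm : k - 1 + 1 = k := Nat.succ_pred_eq_of_pos hk
  have hsum' : Summable (fun j : ℕ => 1 / ζ j ^ (k - 1 + 1)) := by rw [hm]; exact hζsum
  have hζtop : Tendsto ζ atTop atTop := zeta_tendsto_atTop hζpos hζmono hζsum
  -- locally uniform convergence, generic version
  have hLU : ∀ (y : ℕ → ℕ → ℝ), (∀ n j, j < n → ζ j ≤ y n j) →
      (∀ j, Tendsto (fun n => y n j) atTop (nhds (ζ j))) →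
      TendstoLocallyUniformly
        (fun (n : ℕ) (z : ℂ) => ∏ j ∈ Finset.range n, elemFactor (k - 1) (z / (y n j : ℂ)))
        (fun z : ℂ => ∏' j : ℕ, elemFactor (k - 1) (z / (ζ j : ℂ))) atTop := by
    intro y hyge hylim
    rw [tendstoLocallyUniformly_iff_forall_isCompact]
    intro K hK
    obtain ⟨r, hr⟩ := hK.isBounded.subset_closedBall 0
    have hsub : K ⊆ Metric.closedBall (0 : ℂ) (max r 1) :=
      hr.trans (Metric.closedBall_subset_closedBall (le_max_left r 1))
    exact (main_unif hζpos hζmono.monotone hζtop hsum' y hyge hylim (max r 1)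
      (lt_of_lt_of_le one_pos (le_max_right r 1))).mono hsub
  refine ⟨?_, ?_, ?_⟩
  · intro z
    obtain ⟨N, hN⟩ := eventually_atTop.1 (hζtop.eventually_ge_atTop (2 * ‖z‖))
    exact (hasProd_decomp hζpos hsum' z N hN).multipliable
  · have hTLU := hLU (fun _ j => ζ j) (fun n j _ => le_rfl) (fun j => tendsto_const_nhds)
    have hdiff := (tendstoLocallyUniformlyOn_univ.mpr hTLU).differentiableOn
      (Eventually.of_forall fun n =>
        (differentiable_partial_prod (k - 1) ζ n).differentiableOn)
      isOpen_univ
    exact differentiableOn_univ.mp hdiff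
  · exact hLU x (fun n j hj => (hxgt n j hj).le) hxlim
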